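/- Let p ≥ 1 and let λ₁,…,λ_{p+1} be distinct real numbers. Define K : ℝ → ℝ by K(t) = Σ_{j=1}^{p+1} (λ_j − t)_+^p / ∏_{k≠j}(λ_j − λ_k). Then K is decreasing (antitone) on ℝ; K(t) = 1 for all t < min_{1≤k≤p+1} λ_k; and K(t) = 0 for all t ≥ max_{1≤k≤p+1} λ_k. -/

import Mathlib

open Finset

noncomputable def DD (s : Finset ℝ) (f : ℝ → ℝ) : ℝ :=
  ∑ x ∈ s, f x / ∏ y ∈ s.erase x, (x - y)

noncomputable def tp (d : ℕ) (x : ℝ) : ℝ := if 0 ≤ x then x ^ d else 0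

noncomputable def Kf (d : ℕ) (s : Finset ℝ) (t : ℝ) : ℝ := DD s (fun z => tp d (z - t))


lemma DD_leibniz (s : Finset ℝ) {x : ℝ} (hx : x ∈ s) (a : ℝ) (f : ℝ → ℝ) :
    DD s (fun z => (z - a) * f z) = DD (s.erase x) f + (x - a) * DD s f := by
  have key : DD s (fun z => (z - a) * f z) - (x - a) * DD s f = DD (s.erase x) f := by
    unfold DD
    rw [Finset.mul_sum, ← Finset.sum_sub_distrib]
    have h1 : ∀ z ∈ s, ((z - a) * f z) / ∏ y ∈ s.erase z, (z - y)
        - (x - a) * (f z / ∏ y ∈ s.erase z, (z - y))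
        = ((z - x) * f z) / ∏ y ∈ s.erase z, (z - y) := by
      intro z _; ring
    rw [Finset.sum_congr rfl h1]
    rw [← Finset.sum_erase s (a := x) (f := fun z => ((z - x) * f z) / ∏ y ∈ s.erase z, (z - y)) (by simp)]
    apply Finset.sum_congr rfl
    intro z hz
    obtain ⟨hzx, hzs⟩ := Finset.mem_erase.mp hz
    have hxz : x ∈ s.erase z := Finset.mem_erase.mpr ⟨Ne.symm hzx, hx⟩
    have hW : ∏ y ∈ s.erase z, (z - y)
        = (z - x) * ∏ y ∈ (s.erase x).erase z, (z - y) := by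
      rw [Finset.erase_right_comm]
      exact (Finset.mul_prod_erase (s.erase z) (fun y => z - y) hxz).symm
    rw [hW, mul_div_mul_left _ _ (sub_ne_zero_of_ne hzx)]
  linarith [key]

lemma DD_one (s : Finset ℝ) : DD s (fun _ => 1) = if s.card = 1 then 1 else 0 := by
  induction s using Finset.strongInduction with
  | _ s ih =>
    rcases Nat.lt_or_ge s.card 2 with hc | hc
    · interval_cases h : s.card
      · rw [Finset.card_eq_zero.mp h]
        simp [DD]
      · obtain ⟨x, rfl⟩ := Finset.card_eq_one.mp h
        simp [DD]
    · obtain ⟨x, hx, x', hx', hne⟩ := Finset.one_lt_card.mp hc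
      have h1 := DD_leibniz s hx' x (fun _ => 1)
      have h2 := DD_leibniz s hx x (fun _ => 1)
      have e1 := ih (s.erase x') (Finset.erase_ssubset hx')
      have e2 := ih (s.erase x) (Finset.erase_ssubset hx)
      rw [Finset.card_erase_of_mem hx'] at e1
      rw [Finset.card_erase_of_mem hx] at e2
      have hxx : (x' : ℝ) - x ≠ 0 := sub_ne_zero_of_ne (Ne.symm hne)
      have : (x' - x) * DD s (fun _ => 1) = 0 := by
        rw [e1] at h1; rw [e2] at h2
        linarith
      have h0 : DD s (fun _ => 1) = 0 := by
        rcases mul_eq_zero.mp this with h | h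
        · exact absurd h hxx
        · exact h
      rw [h0, if_neg (by omega)]


lemma DD_pow (t : ℝ) : ∀ (d : ℕ) (s : Finset ℝ), d + 1 ≤ s.card →
    DD s (fun z => (z - t) ^ d) = if s.card = d + 1 then 1 else 0 := by
  intro d
  induction d with
  | zero => intro s hs; simp only [pow_zero]; exact DD_one s
  | succ d ih =>
    intro s hs
    have hne : s.Nonempty := Finset.card_pos.mp (by omega)
    obtain ⟨x, hx⟩ := hne
    have hfun : (fun z => (z - t) ^ (d + 1)) = fun z => (z - t) * (z - t) ^ d := by
      funext z; ring
    rw [hfun, DD_leibniz s hx t]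
    have e1 := ih (s.erase x) (by rw [Finset.card_erase_of_mem hx]; omega)
    have e2 := ih s (by omega)
    rw [Finset.card_erase_of_mem hx] at e1
    rw [e1, e2, if_neg (show ¬ s.card = d + 1 by omega), mul_zero, add_zero]
    by_cases h : s.card = d + 2
    · rw [if_pos (by omega), if_pos h]
    · rw [if_neg (by omega), if_neg h]

lemma tp_succ (d : ℕ) (x : ℝ) : tp (d + 1) x = x * tp d x := by
  unfold tp; split_ifs with h
  · ring
  · ring

lemma Kf_key (d : ℕ) (s : Finset ℝ) {x : ℝ} (hx : x ∈ s) (t : ℝ) :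
    Kf (d + 1) s t = Kf d (s.erase x) t + (x - t) * Kf d s t := by
  unfold Kf
  have hfun : (fun z => tp (d + 1) (z - t)) = fun z => (z - t) * tp d (z - t) := by
    funext z; exact tp_succ d (z - t)
  rw [hfun]
  exact DD_leibniz s hx t _

lemma Kf_left (d : ℕ) (s : Finset ℝ) (u : ℝ) (hu : ∀ x ∈ s, u ≤ x)
    (hc : d + 1 ≤ s.card) : Kf d s u = if s.card = d + 1 then 1 else 0 := by
  have : Kf d s u = DD s (fun z => (z - u) ^ d) := by
    unfold Kf DD
    apply Finset.sum_congr rfl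
    intro x hx
    dsimp only
    rw [show tp d (x - u) = (x - u) ^ d from if_pos (by linarith [hu x hx])]
  rw [this]; exact DD_pow u d s hc

lemma Kf_right (d : ℕ) (hd : 1 ≤ d) (s : Finset ℝ) (u : ℝ) (hu : ∀ x ∈ s, x ≤ u) :
    Kf d s u = 0 := by
  unfold Kf DD
  apply Finset.sum_eq_zero
  intro x hx
  dsimp only
  have : tp d (x - u) = 0 := by
    unfold tp
    split_ifs with h
    · have : x - u = 0 := le_antisymm (by linarith [hu x hx]) h
      rw [this]; exact zero_pow (by omega)
    · rfl
  rw [this, zero_div]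


lemma Kf_nonneg : ∀ (d : ℕ) (s : Finset ℝ), s.card = d + 2 → ∀ t : ℝ, 0 ≤ Kf d s t := by
  intro d
  induction d with
  | zero =>
    intro s hs t
    obtain ⟨x, y, hxy, rfl⟩ := Finset.card_eq_two.mp hs
    have h1 : ({x, y} : Finset ℝ).erase x = {y} := by
      rw [Finset.erase_insert (by simpa using hxy)]
    have h2 : ({x, y} : Finset ℝ).erase y = {x} := by
      rw [Finset.erase_insert_of_ne hxy, Finset.erase_singleton, LawfulSingleton.insert_empty_eq]
    rw [Kf, DD, Finset.sum_pair hxy, h1, h2, Finset.prod_singleton, Finset.prod_singleton]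
    unfold tp
    rcases le_or_gt t x with htx | htx <;> rcases le_or_gt t y with hty | hty <;>
      simp only [pow_zero]
    · rw [if_pos (by linarith), if_pos (by linarith)]
      have hne1 : x - y ≠ 0 := sub_ne_zero_of_ne hxy
      have hne2 : y - x ≠ 0 := sub_ne_zero_of_ne (Ne.symm hxy)
      have : (1:ℝ) / (x - y) + 1 / (y - x) = 0 := by field_simp; ring
      linarith
    · rw [if_pos (by linarith), if_neg (by linarith), zero_div, add_zero]
      have : 0 < x - y := by linarith
      positivity
    · rw [if_neg (by linarith), if_pos (by linarith), zero_div, zero_add]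
      have : 0 < y - x := by linarith
      positivity
    · rw [if_neg (by linarith), if_neg (by linarith)]
      norm_num
  | succ d ih =>
    intro s hs t
    have hcard2 : 1 < s.card := by omega
    have hne : s.Nonempty := Finset.card_pos.mp (by omega)
    set x0 := s.min' hne with hx0def
    set x1 := s.max' hne with hx1def
    have hx0 : x0 ∈ s := s.min'_mem hne
    have hx1 : x1 ∈ s := s.max'_mem hne
    have hlt : x0 < x1 := s.min'_lt_max'_of_card hcard2
    rcases le_or_gt t x0 with ht0 | ht0
    · rw [Kf_left (d+1) s t (fun x hx => le_trans ht0 (s.min'_le x hx)) (by omega),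
        if_neg (by omega)]
    rcases le_or_gt x1 t with ht1 | ht1
    · rw [Kf_right (d+1) (by omega) s t (fun x hx => le_trans (s.le_max' x hx) ht1)]
    have h1 := Kf_key d s hx1 t
    have h0 := Kf_key d s hx0 t
    have hF : (x1 - x0) * Kf d s t = Kf d (s.erase x0) t - Kf d (s.erase x1) t := by
      linear_combination h0 - h1
    have hK : (x1 - x0) * Kf (d + 1) s t
        = (t - x0) * Kf d (s.erase x1) t + (x1 - t) * Kf d (s.erase x0) t := by
      linear_combination (x1 - x0) * h1 + (x1 - t) * hF
    have hA := ih (s.erase x1) (by rw [Finset.card_erase_of_mem hx1]; omega) t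
    have hB := ih (s.erase x0) (by rw [Finset.card_erase_of_mem hx0]; omega) t
    nlinarith [hK, hA, hB, mul_nonneg (by linarith : (0:ℝ) ≤ t - x0) hA,
      mul_nonneg (by linarith : (0:ℝ) ≤ x1 - t) hB]


lemma Kf_antitone : ∀ (d : ℕ) (s : Finset ℝ), s.card = d + 1 →
    Antitone (fun t => Kf d s t) := by
  intro d
  induction d with
  | zero =>
    intro s hs
    obtain ⟨x, rfl⟩ := Finset.card_eq_one.mp hs
    intro a b hab
    simp only [Kf, DD, Finset.sum_singleton, Finset.erase_singleton, Finset.prod_empty,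
      div_one, tp, pow_zero]
    split_ifs with h1 h2 h2 <;> norm_num
    · exact absurd (by linarith : (0:ℝ) ≤ x - a) h2
  | succ d ih =>
    intro s hs
    have hcard2 : 1 < s.card := by omega
    have hne : s.Nonempty := Finset.card_pos.mp (by omega)
    set x0 := s.min' hne with hx0def
    set x1 := s.max' hne with hx1def
    have hx0 : x0 ∈ s := s.min'_mem hne
    have hx1 : x1 ∈ s := s.max'_mem hne
    have hlt : x0 < x1 := s.min'_lt_max'_of_card hcard2
    have hmin : ∀ u, u ≤ x0 → Kf (d + 1) s u = 1 := by
      intro u hu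
      rw [Kf_left (d+1) s u (fun x hx => le_trans hu (s.min'_le x hx)) (by omega), if_pos hs]
    have hmax : ∀ u, x1 ≤ u → Kf (d + 1) s u = 0 := by
      intro u hu
      exact Kf_right (d+1) (by omega) s u (fun x hx => le_trans (s.le_max' x hx) hu)
    -- core: monotone on [x0, x1]
    have core : ∀ u v : ℝ, x0 ≤ u → u ≤ v → v ≤ x1 → Kf (d+1) s v ≤ Kf (d+1) s u := by
      intro u v hu huv hv
      have h1u := Kf_key d s hx1 u
      have h0u := Kf_key d s hx0 u
      have h1v := Kf_key d s hx1 v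
      have h0v := Kf_key d s hx0 v
      have hFu : (x1 - x0) * Kf d s u = Kf d (s.erase x0) u - Kf d (s.erase x1) u := by
        linear_combination h0u - h1u
      have hFv : (x1 - x0) * Kf d s v = Kf d (s.erase x0) v - Kf d (s.erase x1) v := by
        linear_combination h0v - h1v
      have hKu : (x1 - x0) * Kf (d + 1) s u
          = (u - x0) * Kf d (s.erase x1) u + (x1 - u) * Kf d (s.erase x0) u := by
        linear_combination (x1 - x0) * h1u + (x1 - u) * hFu
      have hKv : (x1 - x0) * Kf (d + 1) s v
          = (v - x0) * Kf d (s.erase x1) v + (x1 - v) * Kf d (s.erase x0) v := by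
        linear_combination (x1 - x0) * h1v + (x1 - v) * hFv
      have hcA : (s.erase x1).card = d + 1 := by rw [Finset.card_erase_of_mem hx1]; omega
      have hcB : (s.erase x0).card = d + 1 := by rw [Finset.card_erase_of_mem hx0]; omega
      have hAm : Kf d (s.erase x1) v ≤ Kf d (s.erase x1) u := ih (s.erase x1) hcA huv
      have hBm : Kf d (s.erase x0) v ≤ Kf d (s.erase x0) u := ih (s.erase x0) hcB huv
      have hFnn : 0 ≤ Kf d s v := Kf_nonneg d s (by omega) v
      have hBA : Kf d (s.erase x1) v ≤ Kf d (s.erase x0) v := by nlinarith [hFv]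
      nlinarith [hKu, hKv,
        mul_nonneg (by linarith : (0:ℝ) ≤ u - x0) (by linarith : 0 ≤ Kf d (s.erase x1) u - Kf d (s.erase x1) v),
        mul_nonneg (by linarith : (0:ℝ) ≤ x1 - u) (by linarith : 0 ≤ Kf d (s.erase x0) u - Kf d (s.erase x0) v),
        mul_nonneg (by linarith : (0:ℝ) ≤ v - u) (by linarith : 0 ≤ Kf d (s.erase x0) v - Kf d (s.erase x1) v)]
    intro a b hab
    dsimp only
    rcases le_or_gt b x0 with hb0 | hb0
    · rw [hmin a (by linarith), hmin b hb0]
    rcases le_or_gt x1 a with ha1 | ha1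
    · rw [hmax a ha1, hmax b (by linarith)]
    set a' := max a x0 with ha'
    set b' := min b x1 with hb'
    have hxa : Kf (d+1) s a = Kf (d+1) s a' := by
      rcases le_or_gt x0 a with h | h
      · rw [ha', max_eq_left h]
      · rw [hmin a (by linarith), hmin a' (le_of_eq (by rw [ha', max_eq_right (le_of_lt h)]))]
    have hxb : Kf (d+1) s b = Kf (d+1) s b' := by
      rcases le_or_gt b x1 with h | h
      · rw [hb', min_eq_left h]
      · rw [hmax b (by linarith), hmax b' (ge_of_eq (by rw [hb', min_eq_right (le_of_lt h)]))]
    rw [hxa, hxb]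
    exact core a' b' (le_max_right a x0)
      (max_le (le_min hab (le_of_lt ha1)) (le_min (le_of_lt hb0) (le_of_lt hlt)))
      (min_le_right b x1)


/-- The antiderivative `K(t) = ∑ j (λ_j - t)_+^p / ∏_{k≠j}(λ_j - λ_k)` of the basic spline
is antitone, equals `1` to the left of `min λ_k`, and equals `0` from `max λ_k` on. -/
theorem stmt3 (p : ℕ) (hp : 1 ≤ p) (l : Fin (p + 1) → ℝ) (hl : Function.Injective l) :
    Antitone (fun t : ℝ =>
        ∑ j : Fin (p + 1),
          (if 0 ≤ l j - t then (l j - t) ^ p else 0) / ∏ k ∈ univ.erase j, (l j - l k))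
    ∧ (∀ t : ℝ, t < univ.inf' univ_nonempty l →
        ∑ j : Fin (p + 1),
          (if 0 ≤ l j - t then (l j - t) ^ p else 0) / ∏ k ∈ univ.erase j, (l j - l k) = 1)
    ∧ (∀ t : ℝ, univ.sup' univ_nonempty l ≤ t →
        ∑ j : Fin (p + 1),
          (if 0 ≤ l j - t then (l j - t) ^ p else 0) / ∏ k ∈ univ.erase j, (l j - l k) = 0) := by
  set S : Finset ℝ := Finset.image l univ with hS
  have hcard : S.card = p + 1 := by
    rw [hS, Finset.card_image_of_injective _ hl, Finset.card_univ, Fintype.card_fin]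
  have hconv : ∀ t : ℝ,
      (∑ j : Fin (p + 1),
        (if 0 ≤ l j - t then (l j - t) ^ p else 0) / ∏ k ∈ univ.erase j, (l j - l k))
      = Kf p S t := by
    intro t
    rw [Kf, DD, hS, Finset.sum_image (fun a _ b _ h => hl h)]
    apply Finset.sum_congr rfl
    intro j _
    have him : (Finset.image l univ).erase (l j) = Finset.image l (univ.erase j) := by
      rw [Finset.image_erase hl]
    rw [him, Finset.prod_image (fun a _ b _ h => hl h)]
    rfl
  refine ⟨?_, ?_, ?_⟩
  · have := Kf_antitone p S hcard
    intro a b hab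
    simp only
    rw [hconv a, hconv b]
    exact this hab
  · intro t ht
    rw [hconv t, Kf_left p S t ?_ (by omega), if_pos hcard]
    intro x hx
    obtain ⟨j, _, rfl⟩ := Finset.mem_image.mp hx
    exact le_of_lt ((Finset.lt_inf'_iff _).mp ht j (Finset.mem_univ j))
  · intro t ht
    rw [hconv t]
    apply Kf_right p hp S t
    intro x hx
    obtain ⟨j, _, rfl⟩ := Finset.mem_image.mp hx
    exact le_trans (Finset.le_sup' l (Finset.mem_univ j)) ht
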